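/- With Ψ as in the auxiliary-function setting, Ψ is strictly decreasing on [0, x_{2nd-max}), where x_{2nd-max} is the second-largest distinct entry of x. -/

import Mathlib

noncomputable def l1 {n : ℕ} (x : Fin n → ℝ) : ℝ := ∑ i, |x i|
noncomputable def l2 {n : ℕ} (x : Fin n → ℝ) : ℝ := Real.sqrt (∑ i, (x i) ^ 2)
noncomputable def Psi {n : ℕ} (x : Fin n → ℝ) (lam1 lam2 α : ℝ) : ℝ :=
  l1 (fun i => max (x i - α) 0) / l2 (fun i => max (x i - α) 0) - lam1 / lam2

/-- Strict Cauchy–Schwarz for finite sums, when two values differ. -/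
lemma strict_cs {n : ℕ} (T : Finset (Fin n)) (y : Fin n → ℝ)
    {i j : Fin n} (hi : i ∈ T) (hj : j ∈ T) (hne : y i ≠ y j) :
    (∑ k ∈ T, y k) ^ 2 < (T.card : ℝ) * ∑ k ∈ T, y k ^ 2 := by
  classical
  have hij : i ≠ j := fun h => hne (by rw [h])
  set T' := T.erase i with hT'
  have hjT' : j ∈ T' := Finset.mem_erase.2 ⟨Ne.symm hij, hj⟩
  have hins : T = insert i T' := (Finset.insert_erase hi).symm
  have hiT' : i ∉ T' := Finset.notMem_erase i T
  have hS : (∑ k ∈ T, y k) = y i + ∑ k ∈ T', y k := by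
    rw [hins, Finset.sum_insert hiT']
  have hQ : (∑ k ∈ T, y k ^ 2) = y i ^ 2 + ∑ k ∈ T', y k ^ 2 := by
    rw [hins, Finset.sum_insert hiT']
  have hcard : (T.card : ℝ) = (T'.card : ℝ) + 1 := by
    rw [hins, Finset.card_insert_of_notMem hiT']; push_cast; ring
  -- Cauchy–Schwarz on T'
  have cs : (∑ k ∈ T', y k) ^ 2 ≤ (T'.card : ℝ) * ∑ k ∈ T', y k ^ 2 := by
    exact_mod_cast sq_sum_le_card_mul_sum_sq (s := T') (f := y)
  -- strict cross-term bound
  have cross : (∑ k ∈ T', 2 * (y i * y k)) < ∑ k ∈ T', (y i ^ 2 + y k ^ 2) := by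
    refine Finset.sum_lt_sum (fun k _ => by nlinarith [sq_nonneg (y i - y k)]) ⟨j, hjT', ?_⟩
    have hz : y i - y j ≠ 0 := sub_ne_zero.mpr hne
    have h : 0 < (y i - y j) ^ 2 := by positivity
    nlinarith [h]
  have cross' : 2 * (y i * ∑ k ∈ T', y k) <
      (T'.card : ℝ) * y i ^ 2 + ∑ k ∈ T', y k ^ 2 := by
    have h := cross
    rw [Finset.sum_add_distrib, Finset.sum_const, nsmul_eq_mul, ← Finset.mul_sum] at h
    rw [Finset.mul_sum]
    linarith [h]
  rw [hS, hQ, hcard]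
  nlinarith [cs, cross']

/-- Gluing lemma: a continuous function on `Ico 0 c` with negative derivative away from a
finite set of points is strictly antitone. -/
lemma glue_strictAntiOn {f : ℝ → ℝ} {c : ℝ} (B : Finset ℝ)
    (hc : ContinuousOn f (Set.Ico 0 c))
    (hd : ∀ y ∈ Set.Ioo (0 : ℝ) c, y ∉ B → deriv f y < 0) :
    StrictAntiOn f (Set.Ico 0 c) := by
  classical
  have base : ∀ a b : ℝ, a ∈ Set.Ico 0 c → b ∈ Set.Ico 0 c → a < b →
      (B.filter (· ∈ Set.Ioo a b)) = ∅ → f b < f a := by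
    intro a b ha hb hab hempty
    have hsub : Set.Icc a b ⊆ Set.Ico 0 c :=
      fun t ht => ⟨le_trans ha.1 ht.1, lt_of_le_of_lt ht.2 hb.2⟩
    have hanti : StrictAntiOn f (Set.Icc a b) := by
      refine strictAntiOn_of_deriv_neg (convex_Icc a b) (hc.mono hsub) ?_
      intro t ht
      rw [interior_Icc] at ht
      have htB : t ∉ B := by
        intro htB
        have hmem : t ∈ B.filter (· ∈ Set.Ioo a b) := Finset.mem_filter.2 ⟨htB, ht⟩
        rw [hempty] at hmem
        exact absurd hmem (Finset.notMem_empty t)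
      exact hd t ⟨lt_of_le_of_lt ha.1 ht.1, lt_trans ht.2 hb.2⟩ htB
    exact hanti (Set.left_mem_Icc.2 hab.le) (Set.right_mem_Icc.2 hab.le) hab
  have key : ∀ k : ℕ, ∀ a b : ℝ, a ∈ Set.Ico 0 c → b ∈ Set.Ico 0 c → a < b →
      (B.filter (· ∈ Set.Ioo a b)).card ≤ k → f b < f a := by
    intro k
    induction k with
    | zero =>
      intro a b ha hb hab hcard
      exact base a b ha hb hab (Finset.card_eq_zero.1 (Nat.le_zero.1 hcard))
    | succ k ih =>
      intro a b ha hb hab hcard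
      rcases Finset.eq_empty_or_nonempty (B.filter (· ∈ Set.Ioo a b)) with he | ⟨p, hp⟩
      · exact base a b ha hb hab he
      · have hpB := Finset.mem_filter.1 hp
        have hpab : p ∈ Set.Ioo a b := hpB.2
        have hpmem : p ∈ Set.Ico 0 c :=
          ⟨le_trans ha.1 hpab.1.le, lt_trans hpab.2 hb.2⟩
        have hsub1 : B.filter (· ∈ Set.Ioo a p) ⊆ (B.filter (· ∈ Set.Ioo a b)).erase p := by
          intro t ht
          have ht' := Finset.mem_filter.1 ht
          refine Finset.mem_erase.2 ⟨fun h => ?_, Finset.mem_filter.2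
            ⟨ht'.1, ⟨ht'.2.1, lt_trans ht'.2.2 hpab.2⟩⟩⟩
          subst h; exact absurd ht'.2.2 (lt_irrefl _)
        have hsub2 : B.filter (· ∈ Set.Ioo p b) ⊆ (B.filter (· ∈ Set.Ioo a b)).erase p := by
          intro t ht
          have ht' := Finset.mem_filter.1 ht
          refine Finset.mem_erase.2 ⟨fun h => ?_, Finset.mem_filter.2
            ⟨ht'.1, ⟨lt_trans hpab.1 ht'.2.1, ht'.2.2⟩⟩⟩
          subst h; exact absurd ht'.2.1 (lt_irrefl _)
        have hcard1 : (B.filter (· ∈ Set.Ioo a p)).card ≤ k := by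
          have h1 := Finset.card_le_card hsub1
          rw [Finset.card_erase_of_mem hp] at h1
          omega
        have hcard2 : (B.filter (· ∈ Set.Ioo p b)).card ≤ k := by
          have h2 := Finset.card_le_card hsub2
          rw [Finset.card_erase_of_mem hp] at h2
          omega
        exact lt_trans (ih p b hpmem hb hpab.2 hcard2) (ih a p ha hpmem hpab.1 hcard1)
  intro a ha b hb hab
  exact key (B.filter (· ∈ Set.Ioo a b)).card a b ha hb hab le_rfl

theorem stmt_9 {n : ℕ} (x : Fin n → ℝ) (hx : ∀ i, 0 ≤ x i)
    (lam1 lam2 : ℝ) (h0 : 0 < lam2) (h1 : 0 < lam1)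
    (xmax x2 : ℝ) (hub : ∀ i, x i ≤ xmax) (hmaxmem : ∃ i, x i = xmax)
    (h2mem : ∃ i, x i = x2) (h2lt : x2 < xmax)
    (h2ub : ∀ i, x i ≠ xmax → x i ≤ x2) :
    StrictAntiOn (Psi x lam1 lam2) (Set.Ico 0 x2) := by
  classical
  obtain ⟨imax, himax⟩ := hmaxmem
  obtain ⟨i2, hi2⟩ := h2mem
  set S : ℝ → ℝ := fun α => ∑ i, max (x i - α) 0 with hSdef
  set Q : ℝ → ℝ := fun α => ∑ i, max (x i - α) 0 ^ 2 with hQdef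
  have hPsi : ∀ α : ℝ, Psi x lam1 lam2 α = S α / Real.sqrt (Q α) - lam1 / lam2 := by
    intro α
    unfold Psi l1 l2
    congr 1
    congr 1
    exact Finset.sum_congr rfl fun i _ => abs_of_nonneg (le_max_right _ _)
  have hScont : Continuous S :=
    continuous_finset_sum _ fun i _ =>
      ((continuous_const.sub continuous_id).max continuous_const)
  have hQcont : Continuous Q :=
    continuous_finset_sum _ fun i _ =>
      (((continuous_const.sub continuous_id).max continuous_const).pow 2)
  have hQpos : ∀ α ∈ Set.Ico 0 x2, 0 < Q α := by
    intro α hα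
    have hterm : 0 < max (x imax - α) 0 ^ 2 := by
      have hpos : 0 < x imax - α := by rw [himax]; linarith [hα.2]
      have hm : max (x imax - α) 0 = x imax - α := max_eq_left hpos.le
      rw [hm]; positivity
    have hle := Finset.single_le_sum (f := fun i => max (x i - α) 0 ^ 2)
      (fun i _ => by positivity) (Finset.mem_univ imax)
    exact lt_of_lt_of_le hterm hle
  have hcont : ContinuousOn (Psi x lam1 lam2) (Set.Ico 0 x2) := by
    have hc : ContinuousOn (fun α => S α / Real.sqrt (Q α) - lam1 / lam2) (Set.Ico 0 x2) := by
      refine ContinuousOn.sub ?_ continuousOn_const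
      refine ContinuousOn.div hScont.continuousOn
        (Real.continuous_sqrt.comp hQcont).continuousOn ?_
      intro α hα
      exact (Real.sqrt_pos.2 (hQpos α hα)).ne'
    exact hc.congr fun α _ => hPsi α
  refine glue_strictAntiOn (Finset.image x Finset.univ) hcont ?_
  intro α hα hαB
  have hαne : ∀ i, x i ≠ α := by
    intro i hi
    exact hαB (Finset.mem_image.2 ⟨i, Finset.mem_univ i, hi⟩)
  set T : Finset (Fin n) := Finset.univ.filter (fun i => α < x i) with hTdef
  set SL : ℝ → ℝ := fun β => ∑ i ∈ T, (x i - β) with hSL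
  set QL : ℝ → ℝ := fun β => ∑ i ∈ T, (x i - β) ^ 2 with hQL
  have himaxT : imax ∈ T := Finset.mem_filter.2 ⟨Finset.mem_univ _, by
    rw [himax]; linarith [hα.2]⟩
  have hi2T : i2 ∈ T := Finset.mem_filter.2 ⟨Finset.mem_univ _, by
    rw [hi2]; exact hα.2⟩
  -- eventual equality with a smooth local model
  have hev : ∀ᶠ β in nhds α, ∀ i : Fin n, max (x i - β) 0 =
      if α < x i then x i - β else 0 := by
    rw [Filter.eventually_all]
    intro i
    rcases lt_or_gt_of_ne (hαne i) with hlt | hgt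
    · have hev' : ∀ᶠ β in nhds α, x i < β := eventually_gt_nhds hlt
      filter_upwards [hev'] with β hβ
      rw [if_neg (by linarith), max_eq_right (by linarith)]
    · have hev' : ∀ᶠ β in nhds α, β < x i := eventually_lt_nhds hgt
      filter_upwards [hev'] with β hβ
      rw [if_pos hgt, max_eq_left (by linarith)]
  have heq : Psi x lam1 lam2 =ᶠ[nhds α]
      fun β => SL β / Real.sqrt (QL β) - lam1 / lam2 := by
    filter_upwards [hev] with β hβ
    rw [hPsi]
    have hSeq : S β = SL β := by
      simp only [hSdef, hSL, hTdef, Finset.sum_filter]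
      exact Finset.sum_congr rfl fun i _ => by rw [hβ i]
    have hQeq : Q β = QL β := by
      simp only [hQdef, hQL, hTdef, Finset.sum_filter]
      refine Finset.sum_congr rfl fun i _ => ?_
      rw [hβ i]
      by_cases h : α < x i <;> simp [h]
    rw [hSeq, hQeq]
  -- derivatives of the local model
  have hSL' : HasDerivAt SL (-(T.card : ℝ)) α := by
    have h : HasDerivAt (fun β => ∑ i ∈ T, (x i - β)) (∑ _i ∈ T, (-1 : ℝ)) α :=
      HasDerivAt.fun_sum fun i _ => (hasDerivAt_id α).const_sub (x i)
    simpa [hSL] using h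
  have hQL' : HasDerivAt QL (-(2 * SL α)) α := by
    have h : HasDerivAt (fun β => ∑ i ∈ T, (x i - β) ^ 2)
        (∑ i ∈ T, (2 * (x i - α) ^ 1 * (-1))) α :=
      HasDerivAt.fun_sum fun i _ => ((hasDerivAt_id α).const_sub (x i)).pow 2
    have heq2 : (∑ i ∈ T, (2 * (x i - α) ^ 1 * (-1))) = -(2 * SL α) := by
      rw [hSL, Finset.mul_sum, ← Finset.sum_neg_distrib]
      exact Finset.sum_congr rfl fun i _ => by ring
    rw [heq2] at h
    exact h
  have hQLpos : 0 < QL α := by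
    have hpos : 0 < (x imax - α) ^ 2 := by
      have h : 0 < x imax - α := by rw [himax]; linarith [hα.2]
      positivity
    have hle : (x imax - α) ^ 2 ≤ ∑ i ∈ T, (x i - α) ^ 2 :=
      Finset.single_le_sum (f := fun i => (x i - α) ^ 2) (fun i _ => sq_nonneg _) himaxT
    simp only [hQL]
    exact lt_of_lt_of_le hpos hle
  have hsq : 0 < Real.sqrt (QL α) := Real.sqrt_pos.2 hQLpos
  have hsqrt' : HasDerivAt (fun β => Real.sqrt (QL β))
      (1 / (2 * Real.sqrt (QL α)) * (-(2 * SL α))) α :=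
    (Real.hasDerivAt_sqrt hQLpos.ne').comp α hQL'
  have hdiv : HasDerivAt (fun β => SL β / Real.sqrt (QL β))
      (((-(T.card : ℝ)) * Real.sqrt (QL α) -
        SL α * (1 / (2 * Real.sqrt (QL α)) * (-(2 * SL α)))) / (Real.sqrt (QL α)) ^ 2) α :=
    hSL'.div hsqrt' hsq.ne'
  have hderiv_eq : deriv (Psi x lam1 lam2) α =
      ((-(T.card : ℝ)) * Real.sqrt (QL α) -
        SL α * (1 / (2 * Real.sqrt (QL α)) * (-(2 * SL α)))) / (Real.sqrt (QL α)) ^ 2 := by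
    rw [heq.deriv_eq]
    exact (hdiv.sub_const _).deriv
  rw [hderiv_eq]
  have hCS : SL α ^ 2 < (T.card : ℝ) * QL α := by
    have h := strict_cs T (fun i => x i - α) hi2T himaxT (by
      show x i2 - α ≠ x imax - α
      rw [hi2, himax]
      intro h
      exact (ne_of_lt h2lt) (by linarith))
    simpa [hSL, hQL] using h
  have hsq2 : Real.sqrt (QL α) ^ 2 = QL α := Real.sq_sqrt hQLpos.le
  apply div_neg_of_neg_of_pos
  · have hrw : (-(T.card : ℝ)) * Real.sqrt (QL α) -
        SL α * (1 / (2 * Real.sqrt (QL α)) * (-(2 * SL α)))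
        = (SL α ^ 2 - (T.card : ℝ) * QL α) / Real.sqrt (QL α) := by
      rw [eq_div_iff hsq.ne']
      field_simp
      linear_combination (-(T.card : ℝ)) * hsq2
    rw [hrw]
    exact div_neg_of_neg_of_pos (by linarith) hsq
  · positivity
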